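/- The formal power series P(x) = 2xC(x) + log(1 − xC(x)), where C(x) is the Catalan generating function, satisfies P'(x) = C(x); consequently P(x) = Σ_{n≥1} (C_{n−1}/n) x^n = Σ_{n≥1} (2n−2)! x^n/(n!)^2. -/

import Mathlib

open PowerSeries

/-- The ordinary generating function of the Catalan numbers, `C(x) = Σ_{n≥0} Cₙ xⁿ`. -/
noncomputable def catalanSeriesQ : PowerSeries ℚ := PowerSeries.mk fun n => (catalan n : ℚ)

/-- The formal power series `log(1 − y) = −Σ_{k≥1} yᵏ/k`, for `y` with zero constant
term: the `n`-th coefficient only receives contributions from `yᵏ` with `1 ≤ k ≤ n`. -/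
noncomputable def logOneSub (y : PowerSeries ℚ) : PowerSeries ℚ :=
  PowerSeries.mk fun n =>
    PowerSeries.coeff n (-∑ k ∈ Finset.Icc 1 n, ((k : ℚ)⁻¹ • y ^ k))

/-- `P(x) = 2xC(x) + log(1 − xC(x))`. -/
noncomputable def Pseries : PowerSeries ℚ :=
  2 * X * catalanSeriesQ + logOneSub (X * catalanSeriesQ)


lemma coeff_pow_zero {y : PowerSeries ℚ} (hy : constantCoeff y = 0)
    {n k : ℕ} (h : n < k) : PowerSeries.coeff n (y ^ k) = 0 := by
  have : (X : ℚ⟦X⟧) ^ k ∣ y ^ k := pow_dvd_pow_of_dvd (X_dvd_iff.mpr hy) k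
  exact X_pow_dvd_iff.mp this n h

lemma coeff_logOneSub {y : PowerSeries ℚ} (hy : constantCoeff y = 0)
    {n N : ℕ} (h : n ≤ N) :
    PowerSeries.coeff n (logOneSub y) =
      PowerSeries.coeff n (-∑ k ∈ Finset.Icc 1 N, ((k : ℚ)⁻¹ • y ^ k)) := by
  simp only [logOneSub, coeff_mk, map_neg, map_sum, neg_inj]
  apply Finset.sum_subset
  · exact Finset.Icc_subset_Icc_right h
  · intro k hk hk'
    simp only [Finset.mem_Icc] at hk hk'
    have hnk : n < k := by omega
    rw [LinearMap.map_smul, coeff_pow_zero hy hnk, smul_zero]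

lemma deriv_logOneSub {y : PowerSeries ℚ} (hy : constantCoeff y = 0) :
    (1 - y) * d⁄dX ℚ (logOneSub y) = -(d⁄dX ℚ y) := by
  ext n
  set S : ℚ⟦X⟧ := -∑ k ∈ Finset.Icc 1 (n + 1), ((k : ℚ)⁻¹ • y ^ k) with hS
  have hcoeff : ∀ j ≤ n, PowerSeries.coeff j (d⁄dX ℚ (logOneSub y)) =
      PowerSeries.coeff j (d⁄dX ℚ S) := by
    intro j hj
    rw [coeff_derivative, coeff_derivative, coeff_logOneSub hy (by omega : j + 1 ≤ n + 1)]
  have hmul : PowerSeries.coeff n ((1 - y) * d⁄dX ℚ (logOneSub y)) =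
      PowerSeries.coeff n ((1 - y) * d⁄dX ℚ S) := by
    rw [coeff_mul, coeff_mul]
    apply Finset.sum_congr rfl
    intro p hp
    rw [Finset.HasAntidiagonal.mem_antidiagonal] at hp
    rw [hcoeff p.2 (by omega)]
  rw [hmul]
  have hdS : d⁄dX ℚ S = -∑ k ∈ Finset.Icc 1 (n + 1), y ^ (k - 1) * d⁄dX ℚ y := by
    rw [hS, map_neg, map_sum, neg_inj]
    apply Finset.sum_congr rfl
    intro k hk
    rw [Finset.mem_Icc] at hk
    have hk0 : (k : ℚ) ≠ 0 := Nat.cast_ne_zero.mpr (by omega)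
    rw [Derivation.map_smul, Derivation.leibniz_pow, smul_eq_mul, nsmul_eq_mul,
      Algebra.smul_def, ← mul_assoc]
    have h1 : algebraMap ℚ ℚ⟦X⟧ (↑k)⁻¹ * (↑k : ℚ⟦X⟧) = 1 := by
      rw [← map_natCast (algebraMap ℚ ℚ⟦X⟧) k, ← map_mul, inv_mul_cancel₀ hk0, map_one]
    rw [h1, one_mul]
  have hfac : ∑ k ∈ Finset.Icc 1 (n + 1), y ^ (k - 1) * d⁄dX ℚ y =
      (∑ j ∈ Finset.range (n + 1), y ^ j) * d⁄dX ℚ y := by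
    rw [Finset.sum_mul, ← Finset.Ico_add_one_right_eq_Icc, Finset.sum_Ico_eq_sum_range]
    simp
  have htel : (1 - y) * d⁄dX ℚ S = -(d⁄dX ℚ y) + d⁄dX ℚ y * y ^ (n + 1) := by
    rw [hdS, hfac]
    have h1 : (1 - y) * ∑ j ∈ Finset.range (n + 1), y ^ j = 1 - y ^ (n + 1) := by
      rw [Finset.mul_sum]
      have := Finset.sum_range_sub' (fun j => y ^ j) (n + 1)
      simp only [pow_zero] at this
      rw [← this]
      apply Finset.sum_congr rfl
      intro j hj
      ring
    calc (1 - y) * -((∑ j ∈ Finset.range (n + 1), y ^ j) * d⁄dX ℚ y)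
        = -(((1 - y) * ∑ j ∈ Finset.range (n + 1), y ^ j) * d⁄dX ℚ y) := by ring
      _ = -(d⁄dX ℚ y) + d⁄dX ℚ y * y ^ (n + 1) := by rw [h1]; ring
  rw [htel, map_add]
  have : PowerSeries.coeff n (d⁄dX ℚ y * y ^ (n + 1)) = 0 := by
    rw [coeff_mul]
    apply Finset.sum_eq_zero
    intro p hp
    rw [Finset.HasAntidiagonal.mem_antidiagonal] at hp
    rw [coeff_pow_zero hy (show p.2 < n + 1 by omega), mul_zero]
  rw [this, add_zero]

lemma catalanSeries_eq : catalanSeriesQ = 1 + X * catalanSeriesQ ^ 2 := by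
  ext n
  cases n with
  | zero => simp [catalanSeriesQ]
  | succ n =>
    rw [map_add, coeff_succ_X_mul, sq, coeff_mul]
    simp only [catalanSeriesQ, coeff_mk, coeff_one, Nat.succ_ne_zero, if_false, zero_add]
    rw [catalan_succ']
    push_cast
    rfl

lemma constCoeff_XC : constantCoeff (X * catalanSeriesQ) = 0 := by
  simp [map_mul]

lemma catalan_deriv :
    d⁄dX ℚ catalanSeriesQ = catalanSeriesQ ^ 2 +
      X * (2 * catalanSeriesQ * d⁄dX ℚ catalanSeriesQ) := by
  conv_lhs => rw [catalanSeries_eq]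
  rw [map_add, Derivation.map_one_eq_zero, zero_add, Derivation.leibniz, Derivation.leibniz_pow,
    derivative_X, smul_eq_mul, smul_eq_mul, smul_eq_mul]
  ring_nf

lemma Pderiv : d⁄dX ℚ Pseries = catalanSeriesQ := by
  set C := catalanSeriesQ with hCdef
  have hne : (1 : ℚ⟦X⟧) - X * C ≠ 0 := by
    intro h
    have := congrArg (constantCoeff) h
    simp [map_sub, map_mul] at this
  apply mul_left_cancel₀ hne
  have hL := deriv_logOneSub constCoeff_XC
  have hyder : d⁄dX ℚ (X * C) = C + X * d⁄dX ℚ C := by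
    rw [Derivation.leibniz, derivative_X, smul_eq_mul, smul_eq_mul]
    ring
  have hP : d⁄dX ℚ Pseries = (2 * C + 2 * X * d⁄dX ℚ C) + d⁄dX ℚ (logOneSub (X * C)) := by
    rw [Pseries, map_add]
    congr 1
    rw [Derivation.leibniz, Derivation.leibniz, derivative_X]
    have h2 : d⁄dX ℚ (2 : ℚ⟦X⟧) = 0 := by
      rw [show (2 : ℚ⟦X⟧) = (1 : ℚ⟦X⟧) + 1 by norm_num, map_add, Derivation.map_one_eq_zero, add_zero]
    rw [h2]
    simp only [smul_eq_mul]
    ring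
  rw [hP, mul_add, hL, hyder]
  have hC' := catalan_deriv
  linear_combination (X : ℚ⟦X⟧) * hC'

lemma coeff_Pseries (m : ℕ) :
    PowerSeries.coeff (m + 1) Pseries = (catalan m : ℚ) / (m + 1) := by
  have h : PowerSeries.coeff m (d⁄dX ℚ Pseries) = (catalan m : ℚ) := by
    rw [Pderiv, catalanSeriesQ, coeff_mk]
  rw [coeff_derivative] at h
  have hm : ((m : ℚ) + 1) ≠ 0 := by positivity
  field_simp
  push_cast at h ⊢
  linarith [h]

lemma catalan_factorial (m : ℕ) :
    (catalan m : ℚ) / (m + 1) =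
      (Nat.factorial (2 * m) : ℚ) / (Nat.factorial (m + 1) : ℚ) ^ 2 := by
  have h := succ_mul_catalan_eq_centralBinom m
  rw [Nat.centralBinom] at h
  have hc : ((2 * m).choose m : ℚ) =
      (Nat.factorial (2 * m) : ℚ) / ((Nat.factorial m : ℚ) * (Nat.factorial m : ℚ)) := by
    rw [Nat.cast_choose ℚ (show m ≤ 2 * m by omega), show 2 * m - m = m by omega]
  have h' : ((m : ℚ) + 1) * (catalan m : ℚ) =
      (Nat.factorial (2 * m) : ℚ) / ((Nat.factorial m : ℚ) * (Nat.factorial m : ℚ)) := by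
    rw [← hc]
    exact_mod_cast congrArg (Nat.cast : ℕ → ℚ) h
  have hm : ((m : ℚ) + 1) ≠ 0 := by positivity
  have hf : (Nat.factorial m : ℚ) ≠ 0 := Nat.cast_ne_zero.mpr (Nat.factorial_ne_zero m)
  have hfp : (0 : ℚ) < (Nat.factorial m : ℚ) := by
    exact_mod_cast Nat.factorial_pos m
  rw [Nat.factorial_succ]
  push_cast
  have hne2 : ((((m : ℚ) + 1) * (Nat.factorial m : ℚ)) ^ 2) ≠ 0 := by positivity
  rw [div_eq_div_iff hm hne2]
  field_simp at h'
  linear_combination ((m : ℚ) + 1) * h'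

/-- The series `P(x) = 2xC(x) + log(1 − xC(x))` satisfies
`P'(x) = C(x)`; consequently `P(x) = Σ_{n≥1} (C_{n−1}/n) xⁿ = Σ_{n≥1} (2n−2)! xⁿ/(n!)²`. -/
theorem Pseries_derivative_eq_catalan :
    d⁄dX ℚ Pseries = catalanSeriesQ ∧
      ∀ n : ℕ, 1 ≤ n →
        PowerSeries.coeff n Pseries = (catalan (n - 1) : ℚ) / n ∧
        PowerSeries.coeff n Pseries =
          (Nat.factorial (2 * n - 2) : ℚ) / (Nat.factorial n : ℚ) ^ 2 := by
  refine ⟨Pderiv, ?_⟩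
  intro n hn
  obtain ⟨m, rfl⟩ : ∃ m, n = m + 1 := ⟨n - 1, by omega⟩
  have h1 : PowerSeries.coeff (m + 1) Pseries = (catalan (m + 1 - 1) : ℚ) / (m + 1 : ℕ) := by
    rw [coeff_Pseries]
    norm_num
  refine ⟨h1, ?_⟩
  rw [show 2 * (m + 1) - 2 = 2 * m by omega, coeff_Pseries]
  have := catalan_factorial m
  push_cast at this ⊢
  exact this
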